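/- Consider the isotropic planar gyroscopic oscillator with Rayleigh dissipation: ẍ − Bẏ + εẋ + αx = 0, ÿ + Bẋ + εẏ + αy = 0, written as a first-order system ż = A_ε z on ℝ⁴ with z = (x, y, ẋ, ẏ). If α < 0 and B² + 4α > 0 (so that the undamped system ε = 0 is gyroscopically stable), then for every ε > 0 the matrix A_ε has an eigenvalue λ ∈ ℂ with strictly positive real part. -/

import Mathlib

/-- The 4×4 matrix of the isotropic planar gyroscopic oscillator with Rayleigh
dissipation: ẍ − Bẏ + εẋ + αx = 0, ÿ + Bẋ + εẏ + αy = 0, written as a first-order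
system ż = A_ε z with z = (x, y, ẋ, ẏ). -/
noncomputable def gyroDissA (α B ε : ℝ) : Matrix (Fin 4) (Fin 4) ℝ :=
  !![0, 0, 1, 0;
     0, 0, 0, 1;
     -α, 0, -ε, B;
     0, -α, -B, -ε]

set_option maxHeartbeats 1600000 in
/-- Dissipation-induced instability for the isotropic planar gyroscopic oscillator:
if α < 0 and B² + 4α > 0, then for every ε > 0 the matrix A_ε has an eigenvalue
with strictly positive real part. -/
theorem stmt5 (α B : ℝ) (hα : α < 0) (hB : 0 < B ^ 2 + 4 * α) :
    ∀ ε : ℝ, 0 < ε →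
      ∃ lam : ℂ,
        (lam • (1 : Matrix (Fin 4) (Fin 4) ℂ) - (gyroDissA α B ε).map Complex.ofReal).det = 0 ∧
        0 < lam.re := by
  intro ε hε
  -- real quantities
  have hm0 : (0:ℝ) ≤ Real.sqrt ((ε^2 - B^2 - 4*α)^2 + (2*ε*B)^2) := Real.sqrt_nonneg _
  set m : ℝ := Real.sqrt ((ε^2 - B^2 - 4*α)^2 + (2*ε*B)^2) with hm
  have hmsq : m^2 = (ε^2 - B^2 - 4*α)^2 + (2*ε*B)^2 := Real.sq_sqrt (by positivity)
  have hQsq : (ε^2 + B^2 + 4*α)^2 < m^2 := by nlinarith [mul_pos hε hε]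
  have hQ : ε^2 + B^2 + 4*α < m := by nlinarith
  have hargnn : (0:ℝ) ≤ (m + (ε^2 - B^2 - 4*α))/2 := by nlinarith [sq_nonneg ε]
  set a : ℝ := Real.sqrt ((m + (ε^2 - B^2 - 4*α))/2) with ha
  have hasq : a^2 = (m + (ε^2 - B^2 - 4*α))/2 := Real.sq_sqrt hargnn
  have haε : ε < a := by
    have : ε^2 < a^2 := by rw [hasq]; linarith
    nlinarith [Real.sqrt_nonneg ((m + (ε^2 - B^2 - 4*α))/2)]
  have ha0 : 0 < a := lt_trans hε haε
  set b : ℝ := ε*B/a with hb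
  have him : a*b = ε*B := by rw [hb]; field_simp [ha0.ne']
  have hre : a^2 - b^2 = ε^2 - B^2 - 4*α := by
    have hb2 : b^2 = ε^2*B^2/a^2 := by rw [hb]; ring
    rw [hb2]
    field_simp
    linear_combination (a^2 + (m + (ε^2 - B^2 - 4*α))/2 - (ε^2 - B^2 - 4*α)) * hasq + (1/4) * hmsq
  -- complex eigenvalue
  set s : ℂ := (a:ℂ) + (b:ℂ)*Complex.I with hsdef
  have hs : s^2 = ((ε:ℂ) + (B:ℂ)*Complex.I)^2 - 4*(α:ℂ) := by
    rw [hsdef]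
    apply Complex.ext <;>
      simp [pow_two, Complex.add_re, Complex.add_im, Complex.mul_re, Complex.mul_im,
        Complex.sub_re, Complex.sub_im, Complex.ofReal_re, Complex.ofReal_im] <;>
      nlinarith [hre, him]
  refine ⟨(-( (ε:ℂ) + (B:ℂ)*Complex.I) + s)/2, ?_, ?_⟩
  · have hroot : ((-( (ε:ℂ) + (B:ℂ)*Complex.I) + s)/2)^2
        + ((ε:ℂ) + (B:ℂ)*Complex.I)*((-( (ε:ℂ) + (B:ℂ)*Complex.I) + s)/2) + (α:ℂ) = 0 := by
      linear_combination (1/4 : ℂ) * hs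
    set lam : ℂ := (-( (ε:ℂ) + (B:ℂ)*Complex.I) + s)/2 with hlam
    have hM : lam • (1 : Matrix (Fin 4) (Fin 4) ℂ)
        - (gyroDissA α B ε).map Complex.ofReal
        = !![lam, 0, -1, 0; 0, lam, 0, -1; (α:ℂ), 0, lam+(ε:ℂ), -(B:ℂ);
             0, (α:ℂ), (B:ℂ), lam+(ε:ℂ)] := by
      ext i j
      fin_cases i <;> fin_cases j <;>
        simp [gyroDissA, Matrix.one_apply, Matrix.smul_apply, Matrix.sub_apply,
          Matrix.map_apply]
    have hdet : (lam • (1 : Matrix (Fin 4) (Fin 4) ℂ)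
        - (gyroDissA α B ε).map Complex.ofReal).det
        = (lam^2 + (ε:ℂ)*lam + (α:ℂ))^2 + (B:ℂ)^2*lam^2 := by
      rw [hM]
      simp [Matrix.det_succ_row_zero, Fin.sum_univ_succ, Fin.succAbove]
      ring
    rw [hdet]
    linear_combination (lam^2 + ((ε:ℂ) - (B:ℂ)*Complex.I)*lam + (α:ℂ)) * hroot
      + (B:ℂ)^2*lam^2 * Complex.I_sq
  · simp [hsdef, Complex.add_re, Complex.div_re]
    linarith
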